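/- (Proposition 6.) Let g : ℰ^N → ℝ be a function on the lattice of embedded subsets whose Möbius inversion μ^g lives only on the modular elements of ℰ^N (i.e., μ^g(B,Q) = 0 unless (B,Q) is of the form (∅,P^C_⊥) for C ⊆ N, (∅,P_⊥), or (A',P^{A'}_⊥) with A' ≠ ∅). Then there exist set functions v, w : 2^N → ℝ with v(∅) = 0 such that g(A,P) = v(A) + Σ_{B ∈ P} w(B) for all (A,P) ∈ ℰ^N. -/

import Mathlib

open scoped BigOperators

/-- `modp n A` is the modular partition `P^A_⊥` of `Fin n` whose unique (possibly)
non-singleton block is `A`, all other blocks being singletons. -/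
def modp (n : ℕ) (A : Set (Fin n)) : Setoid (Fin n) where
  r x y := x = y ∨ (x ∈ A ∧ y ∈ A)
  iseqv := by
    refine ⟨fun _ => Or.inl rfl, ?_, ?_⟩
    · rintro x y (rfl | ⟨hx, hy⟩)
      · exact Or.inl rfl
      · exact Or.inr ⟨hy, hx⟩
    · rintro x y z (rfl | ⟨hx, hy⟩) h
      · exact h
      · rcases h with rfl | ⟨hy', hz⟩
        · exact Or.inr ⟨hx, hy⟩
        · exact Or.inr ⟨hx, hz⟩

/-- The product `X^N = 2^N × 𝒫^N` of the subset lattice and the partition lattice,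
ordered componentwise. -/
abbrev XN (n : ℕ) := Set (Fin n) × Setoid (Fin n)

/-- The closure operator `cl` on `X^N`:  `cl(∅,P) = (∅,P)` and, for `A ≠ ∅`,
`cl(A,P) = (Ā, P ⊔ P^A_⊥)` where `Ā` is the block of `P ⊔ P^A_⊥` containing `A`. -/
def EmbClosure (n : ℕ) (x : XN n) : XN n :=
  ({y | ∃ a ∈ x.1, (x.2 ⊔ modp n x.1) y a}, x.2 ⊔ modp n x.1)

/-- An embedded subset is a pair that coincides with its closure. -/
def IsEmbedded (n : ℕ) (x : XN n) : Prop := EmbClosure n x = x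

/-- The lattice `ℰ^N` of embedded subsets, with the induced order. -/
abbrev Emb (n : ℕ) := {x : XN n // IsEmbedded n x}

lemma modp_le_of_subsingleton {n : ℕ} {A : Set (Fin n)} (h : A.Subsingleton)
    (Q : Setoid (Fin n)) : modp n A ≤ Q := by
  rw [Setoid.le_def]
  intro x y hxy
  rcases hxy with rfl | ⟨hx, hy⟩
  · exact Q.refl' x
  · obtain rfl := h hx hy
    exact Q.refl' x

lemma modp_eq_bot_of_subsingleton {n : ℕ} {A : Set (Fin n)} (h : A.Subsingleton) :
    modp n A = ⊥ :=
  le_antisymm (modp_le_of_subsingleton h ⊥) bot_le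

lemma embedded_empty (n : ℕ) (Q : Setoid (Fin n)) : IsEmbedded n (∅, Q) := by
  unfold IsEmbedded EmbClosure
  refine Prod.ext ?_ ?_
  · simp
  · simpa using sup_eq_left.mpr (modp_le_of_subsingleton Set.subsingleton_empty Q)

lemma embedded_univ_top (n : ℕ) : IsEmbedded n (Set.univ, ⊤) := by
  unfold IsEmbedded EmbClosure
  refine Prod.ext ?_ ?_
  · ext y
    simp only [Set.mem_setOf_eq, Set.mem_univ, iff_true]
    exact ⟨y, trivial, Setoid.refl' _ y⟩
  · exact sup_eq_left.mpr le_top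

lemma embedded_singleton (n : ℕ) (i : Fin n) : IsEmbedded n ({i}, ⊥) := by
  have hb : modp n ({i} : Set (Fin n)) = ⊥ :=
    modp_eq_bot_of_subsingleton Set.subsingleton_singleton
  unfold IsEmbedded EmbClosure
  refine Prod.ext ?_ ?_
  · ext y
    simp only [Set.mem_setOf_eq, hb, sup_idem, Set.mem_singleton_iff]
    constructor
    · rintro ⟨a, ha, hrel⟩
      subst ha
      have h2 : (⊥ ⊔ modp n ({a} : Set (Fin n))) y a := hrel
      rw [modp_eq_bot_of_subsingleton Set.subsingleton_singleton, sup_idem] at h2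
      simpa [Setoid.bot_def] using h2
    · rintro rfl
      exact ⟨y, rfl, Setoid.refl' _ y⟩
  · simp [hb]

/-- The bottom element `(∅, P_⊥)` of `ℰ^N`. -/
def botE (n : ℕ) : Emb n := ⟨(∅, ⊥), embedded_empty n ⊥⟩

/-- The top element `(N, P^⊤)` of `ℰ^N`. -/
def topE (n : ℕ) : Emb n := ⟨(Set.univ, ⊤), embedded_univ_top n⟩

/-- The atom `({i}, P_⊥)` of `ℰ^N`. -/
def atomS (n : ℕ) (i : Fin n) : Emb n := ⟨({i}, ⊥), embedded_singleton n i⟩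

/-- The atom `(∅, [ij])` of `ℰ^N`, where `[ij]` is the atom of the partition lattice
whose unique non-singleton block is the pair `{i, j}`. -/
def atomP (n : ℕ) (i j : Fin n) : Emb n := ⟨(∅, modp n {i, j}), embedded_empty n _⟩

/-- A pair is an atom candidate: of the form `({i},P_⊥)` or `(∅,[ij])` with `i ≠ j`. -/
def IsAtomPair (n : ℕ) (a : XN n) : Prop :=
  (∃ i : Fin n, a = ({i}, ⊥)) ∨ ∃ i j : Fin n, i ≠ j ∧ a = (∅, modp n {i, j})

/-- The number of blocks `|P|` of a partition. -/
noncomputable def numBlocks {α : Type*} (P : Setoid α) : ℕ := P.classes.ncard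

/-- The rank function `r(A,P) = (n − |P|) + min{|A|,1}` of `ℰ^N`. -/
noncomputable def erank (n : ℕ) (x : XN n) : ℕ := (n - numBlocks x.2) + min x.1.ncard 1

/-- The partition `Q^S` of `S` induced by a partition `Q` of `N`. -/
def indPart {n : ℕ} (S : Set (Fin n)) (Q : Setoid (Fin n)) : Setoid S :=
  Setoid.comap Subtype.val Q

/-- `mu` is the Möbius function of the (finite) poset `α`. -/
def IsMobius {α : Type*} [PartialOrder α] (mu : α → α → ℤ) : Prop :=
  (∀ x, mu x x = 1) ∧
  (∀ x y, ¬x ≤ y → mu x y = 0) ∧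
  (∀ x y, x < y → mu x y = -∑ᶠ z ∈ Set.Ico x y, mu x z)

section AuxiliaryLemmas

open Finset in
lemma mobius_inversion {α : Type*} [PartialOrder α] [Fintype α] (mu : α → α → ℤ)
    (hmu : IsMobius mu) (f : α → ℝ) (x : α) :
    f x = ∑ᶠ y ∈ Set.Iic x, ∑ᶠ z ∈ Set.Iic y, (mu z y : ℝ) * f z := by
  classical
  have hIic : ∀ a : α, Set.Iic a = ↑(univ.filter (· ≤ a)) := by
    intro a; ext b; simp [Set.mem_Iic]
  have hIco : ∀ a b : α, Set.Ico a b = ↑(univ.filter (fun y => a ≤ y ∧ y < b)) := by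
    intro a b; ext c; simp [Set.mem_Ico]
  have key : ∀ z, z ≤ x → ∑ y ∈ univ.filter (fun y => z ≤ y ∧ y ≤ x), mu z y
      = if z = x then 1 else 0 := by
    intro z hz
    rcases eq_or_lt_of_le hz with rfl | hlt
    · rw [if_pos rfl]
      have : univ.filter (fun y => z ≤ y ∧ y ≤ z) = {z} := by
        ext y; simp only [mem_filter, mem_univ, true_and, mem_singleton]
        constructor
        · rintro ⟨h1, h2⟩; exact le_antisymm h2 h1
        · rintro rfl; exact ⟨le_rfl, le_rfl⟩
      rw [this, sum_singleton, hmu.1]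
    · rw [if_neg (ne_of_lt hlt)]
      have hsplit : univ.filter (fun y => z ≤ y ∧ y ≤ x)
          = insert x (univ.filter (fun y => z ≤ y ∧ y < x)) := by
        ext y; simp only [mem_filter, mem_univ, true_and, mem_insert]
        constructor
        · rintro ⟨h1, h2⟩
          rcases eq_or_lt_of_le h2 with rfl | h3
          · exact Or.inl rfl
          · exact Or.inr ⟨h1, h3⟩
        · rintro (rfl | ⟨h1, h2⟩)
          · exact ⟨hz, le_rfl⟩
          · exact ⟨h1, le_of_lt h2⟩
      have hx : x ∉ univ.filter (fun y => z ≤ y ∧ y < x) := by simp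
      rw [hsplit, sum_insert hx, hmu.2.2 z x hlt, hIco z x, finsum_mem_coe_finset]
      ring
  calc f x = ∑ z ∈ univ.filter (· ≤ x),
        (if z = x then (1:ℝ) else 0) * f z := by
        simp only [ite_mul, one_mul, zero_mul]
        rw [Finset.sum_ite_eq' (univ.filter (· ≤ x)) x f]
        simp
    _ = ∑ z ∈ univ.filter (· ≤ x),
        ∑ y ∈ univ.filter (fun y => z ≤ y ∧ y ≤ x), (mu z y : ℝ) * f z := by
        refine sum_congr rfl fun z hz => ?_
        simp only [mem_filter, mem_univ, true_and] at hz
        rw [← sum_mul, ← Int.cast_sum, key z hz]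
        split <;> simp
    _ = ∑ y ∈ univ.filter (· ≤ x),
        ∑ z ∈ univ.filter (· ≤ y), (mu z y : ℝ) * f z := by
        refine Finset.sum_comm' ?_ |>.symm
        intro y z
        simp only [mem_filter, mem_univ, true_and]
        constructor
        · rintro ⟨h1, h2⟩; exact ⟨⟨h2, h1⟩, le_trans h2 h1⟩
        · rintro ⟨⟨h1, h2⟩, _⟩; exact ⟨h2, h1⟩
    _ = ∑ᶠ y ∈ Set.Iic x, ∑ᶠ z ∈ Set.Iic y, (mu z y : ℝ) * f z := by
        rw [hIic x, finsum_mem_coe_finset]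
        refine sum_congr rfl fun y _ => ?_
        rw [hIic y, finsum_mem_coe_finset]

instance finiteSetoidFin (n : ℕ) : Finite (Setoid (Fin n)) :=
  Finite.of_injective (fun s => s.r)
    (fun a b h => Setoid.ext fun x y => by rw [show a.r = b.r from h])

lemma modp_rel_iff {n : ℕ} {A : Set (Fin n)} {x y : Fin n} :
    modp n A x y ↔ x = y ∨ (x ∈ A ∧ y ∈ A) := Iff.rfl

lemma modp_mono {n : ℕ} {A B : Set (Fin n)} (h : A ⊆ B) : modp n A ≤ modp n B := by
  rw [Setoid.le_def]
  rintro x y (rfl | ⟨hx, hy⟩)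
  · exact (modp n B).refl' x
  · exact Or.inr ⟨h hx, h hy⟩

lemma modp_le_iff {n : ℕ} {C : Set (Fin n)} {P : Setoid (Fin n)} :
    modp n C ≤ P ↔ ∀ a ∈ C, ∀ b ∈ C, P a b := by
  rw [Setoid.le_def]
  constructor
  · intro h a ha b hb
    exact h (Or.inr ⟨ha, hb⟩)
  · rintro h x y (rfl | ⟨hx, hy⟩)
    · exact P.refl' x
    · exact h x hx y hy

lemma modp_ne_bot {n : ℕ} {C : Set (Fin n)} (h : 2 ≤ C.ncard) : modp n C ≠ ⊥ := by
  intro hbot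
  obtain ⟨a, ha, b, hb, hab⟩ := (Set.one_lt_ncard C.toFinite).mp h
  have : modp n C a b := Or.inr ⟨ha, hb⟩
  rw [hbot] at this
  exact hab (by simpa [Setoid.bot_def] using this)

lemma modp_inj {n : ℕ} {C C' : Set (Fin n)} (hC : 2 ≤ C.ncard) (hC' : 2 ≤ C'.ncard)
    (h : modp n C = modp n C') : C = C' := by
  have key : ∀ {D D' : Set (Fin n)}, 2 ≤ D.ncard → modp n D = modp n D' → D ⊆ D' := by
    intro D D' hD hDD' a ha
    obtain ⟨b, hb, hba⟩ := Set.exists_ne_of_one_lt_ncard hD a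
    have hrel : modp n D a b := Or.inr ⟨ha, hb⟩
    rw [hDD'] at hrel
    rcases hrel with heq | ⟨h1, _⟩
    · exact absurd heq.symm hba
    · exact h1
  exact le_antisymm (key hC h) (key hC' h.symm)

lemma isEmbedded_modp (n : ℕ) (A : Set (Fin n)) : IsEmbedded n (A, modp n A) := by
  unfold IsEmbedded EmbClosure
  refine Prod.ext ?_ ?_
  · ext y
    show (∃ a ∈ A, (modp n A ⊔ modp n A) y a) ↔ y ∈ A
    rw [sup_idem]
    constructor
    · rintro ⟨a, ha, (rfl | ⟨hy, _⟩)⟩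
      exacts [ha, hy]
    · intro hy
      exact ⟨y, hy, Or.inl rfl⟩
  · simp

lemma modp_le_of_embedded {n : ℕ} {x : XN n} (h : IsEmbedded n x) :
    modp n x.1 ≤ x.2 :=
  sup_eq_left.mp (congrArg Prod.snd h)

lemma emb_le_iff {n : ℕ} {y x : Emb n} :
    y ≤ x ↔ y.val.1 ⊆ x.val.1 ∧ y.val.2 ≤ x.val.2 := Iff.rfl

/-- `(A, P^A_⊥)` as an embedded subset. -/
def embA (n : ℕ) (A : Set (Fin n)) : Emb n := ⟨(A, modp n A), isEmbedded_modp n A⟩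

/-- `(∅, P^C_⊥)` as an embedded subset. -/
def embC (n : ℕ) (C : Set (Fin n)) : Emb n := ⟨(∅, modp n C), embedded_empty n _⟩

lemma class_mem_classes {α : Type*} (P : Setoid α) (a : α) :
    {x | P x a} ∈ P.classes := ⟨a, rfl⟩

lemma classes_eq_of_mem {α : Type*} {P : Setoid α} {B B' : Set α} (hB : B ∈ P.classes)
    (hB' : B' ∈ P.classes) {a : α} (ha : a ∈ B) (ha' : a ∈ B') : B = B' := by
  obtain ⟨b, -, hu⟩ := (Setoid.isPartition_classes P).2 a
  exact (hu B ⟨hB, ha⟩).trans (hu B' ⟨hB', ha'⟩).symm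

lemma rel_of_mem_class {α : Type*} {P : Setoid α} {B : Set α} (hB : B ∈ P.classes)
    {a b : α} (ha : a ∈ B) (hb : b ∈ B) : P a b := by
  obtain ⟨y, rfl⟩ := hB
  exact P.trans' ha (P.symm' hb)

end AuxiliaryLemmas

theorem modular_support_decomposition (n : ℕ) (hn : 1 ≤ n) (g : Emb n → ℝ)
    (mu : Emb n → Emb n → ℤ) (hmu : IsMobius mu)
    (hsupp : ∀ x : Emb n,
      ¬((∃ C : Set (Fin n), x.val = (∅, modp n C)) ∨
        (∃ A' : Set (Fin n), A' ≠ ∅ ∧ x.val = (A', modp n A'))) →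
      ∑ᶠ y ∈ Set.Iic x, (mu y x : ℝ) * g y = 0) :
    ∃ v w : Set (Fin n) → ℝ, v ∅ = 0 ∧
      ∀ x : Emb n, g x = v x.val.1 + ∑ᶠ B ∈ x.val.2.classes, w B := by
  classical
  haveI : Fintype (Emb n) := Fintype.ofFinite _
  set μg : Emb n → ℝ := fun y => ∑ᶠ z ∈ Set.Iic y, (mu z y : ℝ) * g z with hμg
  have hg : ∀ x : Emb n, g x = ∑ᶠ y ∈ Set.Iic x, μg y := fun x =>
    mobius_inversion mu hmu g x
  set S : Set (Emb n) := {y : Emb n | (∃ C : Set (Fin n), y.val = (∅, modp n C)) ∨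
      (∃ A' : Set (Fin n), A' ≠ ∅ ∧ y.val = (A', modp n A'))} with hSdef
  have hS0 : ∀ y, y ∉ S → μg y = 0 := fun y hy => hsupp y hy
  set z0 : Fin n := ⟨0, hn⟩ with hz0
  refine ⟨fun A => ∑ᶠ A' ∈ {A' : Set (Fin n) | A' ≠ ∅ ∧ A' ⊆ A}, μg (embA n A'),
      fun B => (if z0 ∈ B then μg (botE n) else 0)
        + ∑ᶠ C ∈ {C : Set (Fin n) | C ⊆ B ∧ 2 ≤ C.ncard}, μg (embC n C), ?_, ?_⟩
  · have hempty : {A' : Set (Fin n) | A' ≠ ∅ ∧ A' ⊆ (∅ : Set (Fin n))} = ∅ := by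
      ext A'
      simp only [Set.mem_setOf_eq, Set.subset_empty_iff, Set.mem_empty_iff_false, iff_false]
      rintro ⟨h1, h2⟩; exact h1 h2
    show (∑ᶠ A' ∈ {A' : Set (Fin n) | A' ≠ ∅ ∧ A' ⊆ (∅ : Set (Fin n))}, μg (embA n A')) = 0
    rw [hempty, finsum_mem_empty]
  · intro x
    set A : Set (Fin n) := x.val.1 with hA
    set P : Setoid (Fin n) := x.val.2 with hP
    set T2 : Set (Set (Fin n)) := {A' | A' ≠ ∅ ∧ A' ⊆ A} with hT2
    set T3 : Set (Set (Fin n)) := {C | 2 ≤ C.ncard ∧ modp n C ≤ P} with hT3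
    -- step 1: restrict the sum to `S`
    have hz2 : ∑ᶠ y ∈ Set.Iic x \ S, μg y = 0 :=
      finsum_mem_of_eqOn_zero (fun y hy => hS0 y hy.2)
    have step1 : g x = ∑ᶠ y ∈ Set.Iic x ∩ S, μg y := by
      calc g x = ∑ᶠ y ∈ Set.Iic x, μg y := hg x
        _ = ∑ᶠ y ∈ (Set.Iic x ∩ S) ∪ (Set.Iic x \ S), μg y := by
            rw [Set.inter_union_diff]
        _ = (∑ᶠ y ∈ Set.Iic x ∩ S, μg y) + ∑ᶠ y ∈ Set.Iic x \ S, μg y :=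
            finsum_mem_union (Set.disjoint_left.mpr fun a ha hb => hb.2 ha.2)
              (Set.toFinite _) (Set.toFinite _)
        _ = ∑ᶠ y ∈ Set.Iic x ∩ S, μg y := by rw [hz2, add_zero]
    -- step 2: decompose `Iic x ∩ S`
    have hmodpA : modp n A ≤ P := modp_le_of_embedded x.prop
    have step2 : Set.Iic x ∩ S = ({botE n} ∪ embA n '' T2) ∪ embC n '' T3 := by
      ext y
      constructor
      · rintro ⟨hle, hC | hA'⟩
        · obtain ⟨C, hC⟩ := hC
          by_cases hsub : C.Subsingleton
          · refine Or.inl (Or.inl ?_)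
            have : y.val = (∅, (⊥ : Setoid (Fin n))) := by
              rw [hC, modp_eq_bot_of_subsingleton hsub]
            exact Subtype.ext this
          · rw [Set.not_subsingleton_iff] at hsub
            obtain ⟨a, ha, b, hb, hab⟩ := hsub
            have h2 : 2 ≤ C.ncard := (Set.one_lt_ncard C.toFinite).mpr ⟨a, ha, b, hb, hab⟩
            refine Or.inr ⟨C, ⟨h2, ?_⟩, Subtype.ext hC.symm⟩
            have := (emb_le_iff.mp hle).2
            rwa [show y.val.2 = modp n C from congrArg Prod.snd hC] at this
        · obtain ⟨A', hA'ne, hval⟩ := hA'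
          refine Or.inl (Or.inr ⟨A', ⟨hA'ne, ?_⟩, Subtype.ext hval.symm⟩)
          have := (emb_le_iff.mp hle).1
          rwa [show y.val.1 = A' from congrArg Prod.fst hval] at this
      · rintro ((hy | ⟨A', ⟨hA'ne, hsub⟩, rfl⟩) | ⟨C, ⟨h2, hle⟩, rfl⟩)
        · rw [Set.mem_singleton_iff] at hy
          subst hy
          refine ⟨emb_le_iff.mpr ⟨Set.empty_subset _, bot_le⟩, Or.inl ⟨∅, ?_⟩⟩
          rw [modp_eq_bot_of_subsingleton Set.subsingleton_empty]
          rfl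
        · exact ⟨emb_le_iff.mpr ⟨hsub, le_trans (modp_mono hsub) hmodpA⟩,
            Or.inr ⟨A', hA'ne, rfl⟩⟩
        · exact ⟨emb_le_iff.mpr ⟨Set.empty_subset _, hle⟩, Or.inl ⟨C, rfl⟩⟩
    -- disjointness facts
    have d1 : Disjoint ({botE n} : Set (Emb n)) (embA n '' T2) := by
      rw [Set.disjoint_left]
      rintro a ha ⟨A', ⟨hA'ne, -⟩, hEq⟩
      rw [Set.mem_singleton_iff] at ha
      subst ha
      exact hA'ne (congrArg (fun z : Emb n => z.val.1) hEq)
    have d2 : Disjoint (({botE n} : Set (Emb n)) ∪ embA n '' T2) (embC n '' T3) := by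
      rw [Set.disjoint_left]
      rintro a (ha | ⟨A', ⟨hA'ne, -⟩, rfl⟩) ⟨C, ⟨h2, -⟩, hEq⟩
      · rw [Set.mem_singleton_iff] at ha
        subst ha
        exact modp_ne_bot h2 (congrArg (fun z : Emb n => z.val.2) hEq)
      · exact hA'ne (congrArg (fun z : Emb n => z.val.1) hEq).symm
    have injA : Set.InjOn (embA n) T2 := fun a _ b _ h =>
      congrArg (fun z : Emb n => z.val.1) h
    have injC : Set.InjOn (embC n) T3 := fun a ha b hb h =>
      modp_inj ha.1 hb.1 (congrArg (fun z : Emb n => z.val.2) h)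
    have step3 : g x = μg (botE n) + (∑ᶠ A' ∈ T2, μg (embA n A'))
        + ∑ᶠ C ∈ T3, μg (embC n C) := by
      rw [step1, step2,
        finsum_mem_union d2 (Set.toFinite _) (Set.toFinite _),
        finsum_mem_union d1 (Set.toFinite _) (Set.toFinite _),
        finsum_mem_singleton, finsum_mem_image injA, finsum_mem_image injC]
    -- blocks decomposition of T3
    set U : Set (Fin n) → Set (Set (Fin n)) :=
      fun B => {C | C ⊆ B ∧ 2 ≤ C.ncard} with hU
    have hT3U : T3 = ⋃ B ∈ P.classes, U B := by
      ext C
      simp only [Set.mem_iUnion, exists_prop]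
      constructor
      · rintro ⟨h2, hle⟩
        obtain ⟨a, ha⟩ := Set.nonempty_of_ncard_ne_zero (by omega : C.ncard ≠ 0)
        refine ⟨{x | P x a}, class_mem_classes P a, fun b hb => ?_, h2⟩
        exact modp_le_iff.mp hle b hb a ha
      · rintro ⟨B, hB, hsub, h2⟩
        exact ⟨h2, modp_le_iff.mpr fun a ha b hb =>
          rel_of_mem_class hB (hsub ha) (hsub hb)⟩
    have hpwd : P.classes.PairwiseDisjoint U := by
      intro B1 h1 B2 h2 hne
      rw [Function.onFun, Set.disjoint_left]
      rintro C ⟨hs1, h2c⟩ ⟨hs2, -⟩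
      obtain ⟨a, ha⟩ := Set.nonempty_of_ncard_ne_zero (by omega : C.ncard ≠ 0)
      exact hne (classes_eq_of_mem h1 h2 (hs1 ha) (hs2 ha))
    have step4 : ∑ᶠ C ∈ T3, μg (embC n C)
        = ∑ᶠ B ∈ P.classes, ∑ᶠ C ∈ U B, μg (embC n C) := by
      rw [hT3U, finsum_mem_biUnion hpwd (Set.toFinite _) (fun B _ => Set.toFinite _)]
    -- the indicator sum over classes
    have step5 : ∑ᶠ B ∈ P.classes, (if z0 ∈ B then μg (botE n) else 0) = μg (botE n) := by
      set B0 : Set (Fin n) := {b | P b z0} with hB0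
      have hB0c : B0 ∈ P.classes := class_mem_classes P z0
      have hz0B0 : z0 ∈ B0 := P.refl' z0
      have hcl : P.classes = {B0} ∪ (P.classes \ {B0}) :=
        (Set.union_diff_cancel (Set.singleton_subset_iff.mpr hB0c)).symm
      have hz3 : ∑ᶠ B ∈ P.classes \ {B0}, (if z0 ∈ B then μg (botE n) else 0) = 0 :=
        finsum_mem_of_eqOn_zero (fun B hB => if_neg fun hmem =>
          hB.2 (Set.mem_singleton_iff.mpr (classes_eq_of_mem hB.1 hB0c hmem hz0B0)))
      rw [hcl, finsum_mem_union
          (Set.disjoint_left.mpr fun a ha hb => hb.2 ha)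
          (Set.toFinite _) (Set.toFinite _),
        finsum_mem_singleton, if_pos hz0B0, hz3, add_zero]
    -- assemble
    have hw : ∑ᶠ B ∈ P.classes, ((if z0 ∈ B then μg (botE n) else 0)
        + ∑ᶠ C ∈ U B, μg (embC n C))
        = μg (botE n) + ∑ᶠ B ∈ P.classes, ∑ᶠ C ∈ U B, μg (embC n C) := by
      rw [finsum_mem_add_distrib (Set.toFinite _), step5]
    show g x = (∑ᶠ A' ∈ T2, μg (embA n A'))
        + ∑ᶠ B ∈ P.classes, ((if z0 ∈ B then μg (botE n) else 0)
          + ∑ᶠ C ∈ U B, μg (embC n C))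
    rw [hw, step3, step4]
    ring
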